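/- Let f₁, f₂ : ℝ → ℂ be continuous and b₁, b₂, c₁, c₂ ∈ ℝ nonzero reals with c₁/b₁ ≠ c₂/b₂, and suppose f₁(b₁x + c₁y) + f₂(b₂x + c₂y) = g(x) + h(y) for all x, y ∈ ℝ, where g, h : ℝ → ℂ. Then f₁ and f₂ are polynomials of degree at most 2. -/

import Mathlib

/-- A continuous additive function `ℝ → ℂ` is linear. -/
lemma addCont_linear (φ : ℝ → ℂ) (hc : Continuous φ)
    (hadd : ∀ a b : ℝ, φ (a + b) = φ a + φ b) (x : ℝ) : φ x = (x : ℂ) * φ 1 := by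
  let F : ℝ →+ ℂ := AddMonoidHom.mk' φ hadd
  have hF : Continuous F := hc
  have := (F.toRealLinearMap hF).map_smul x 1
  simp only [AddMonoidHom.coe_toRealLinearMap] at this
  simpa [F, Complex.real_smul] using this

/-- Key lemma: one-sided version. Only continuity of `f₁` is needed. -/
lemma key (f₁ f₂ g h : ℝ → ℂ) (hf₁ : Continuous f₁)
    (b₁ b₂ c₁ c₂ : ℝ) (hb₁ : b₁ ≠ 0) (hc₁ : c₁ ≠ 0) (hk : b₁ * c₂ - c₁ * b₂ ≠ 0)
    (heq : ∀ x y : ℝ, f₁ (b₁ * x + c₁ * y) + f₂ (b₂ * x + c₂ * y) = g x + h y) :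
    ∃ a b c : ℂ, ∀ x : ℝ, f₁ x = a * (x : ℂ) ^ 2 + b * (x : ℂ) + c := by
  set k := b₁ * c₂ - c₁ * b₂ with hkdef
  -- step 1: f₁(b₁x+c₁y+s) - f₁(b₁x+c₁y) = G_s(x) + H_s(y)
  have step1 : ∀ s x y : ℝ,
      f₁ (b₁ * x + c₁ * y + s) - f₁ (b₁ * x + c₁ * y)
        = (g (x + s * c₂ / k) - g x) + (h (y - s * b₂ / k) - h y) := by
    intro s x y
    have h1 := heq (x + s * c₂ / k) (y - s * b₂ / k)
    have h2 := heq x y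
    have e1 : b₁ * (x + s * c₂ / k) + c₁ * (y - s * b₂ / k) = b₁ * x + c₁ * y + s := by
      field_simp
      ring
    have e2 : b₂ * (x + s * c₂ / k) + c₂ * (y - s * b₂ / k) = b₂ * x + c₂ * y := by
      field_simp
      ring
    rw [e1, e2] at h1
    linear_combination h1 - h2
  -- step 2: rectangle identity for φ_s
  have step2 : ∀ s u α β : ℝ,
      (f₁ (u + α + β + s) - f₁ (u + α + β)) - (f₁ (u + α + s) - f₁ (u + α))
        - (f₁ (u + β + s) - f₁ (u + β)) + (f₁ (u + s) - f₁ u) = 0 := by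
    intro s u α β
    have e00 := step1 s (u / b₁) 0
    have e10 := step1 s ((u + α) / b₁) 0
    have e01 := step1 s (u / b₁) (β / c₁)
    have e11 := step1 s ((u + α) / b₁) (β / c₁)
    have r1 : b₁ * (u / b₁) + c₁ * (0:ℝ) = u := by field_simp; ring
    have r2 : b₁ * ((u + α) / b₁) + c₁ * (0:ℝ) = u + α := by field_simp; ring
    have r3 : b₁ * (u / b₁) + c₁ * (β / c₁) = u + β := by field_simp
    have r4 : b₁ * ((u + α) / b₁) + c₁ * (β / c₁) = u + α + β := by field_simp
    rw [r1] at e00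
    rw [r2] at e10
    rw [r3] at e01
    rw [r4] at e11
    linear_combination e11 - e10 - e01 + e00
  -- define A and B
  set A : ℝ → ℂ := fun s => f₁ (1 + s) - f₁ s - f₁ 1 + f₁ 0 with hA
  set B : ℝ → ℂ := fun s => f₁ s - f₁ 0 with hB
  -- step 3: f₁(u+s) = f₁ u + A s * u + B s
  have step3 : ∀ s u : ℝ, f₁ (u + s) = f₁ u + A s * (u : ℂ) + B s := by
    intro s u
    set ψ : ℝ → ℂ := fun v => (f₁ (v + s) - f₁ v) - (f₁ (0 + s) - f₁ 0) with hψ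
    have hψc : Continuous ψ := by
      apply Continuous.sub
      · exact (hf₁.comp (continuous_id.add continuous_const)).sub hf₁
      · exact continuous_const
    have hψadd : ∀ a b : ℝ, ψ (a + b) = ψ a + ψ b := by
      intro a b
      have := step2 s 0 a b
      simp only [zero_add] at this
      simp only [hψ, zero_add]
      linear_combination this
    have := addCont_linear ψ hψc hψadd u
    simp only [hψ, zero_add] at this
    simp only [hA, hB]
    linear_combination this
  -- combined identity
  have hcomb : ∀ s t u : ℝ,
      A (s + t) * (u : ℂ) + B (s + t) = A s * ((u : ℝ) + t : ℝ) + B s + A t * (u : ℂ) + B t := by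
    intro s t u
    have e1 := step3 (s + t) u
    have e2 := step3 s (u + t)
    have e3 := step3 t u
    have e : u + (s + t) = u + t + s := by ring
    rw [e] at e1
    push_cast at e1 e2 e3 ⊢
    linear_combination e2 + e3 - e1
  have hAadd : ∀ s t : ℝ, A (s + t) = A s + A t := by
    intro s t
    have h0 := hcomb s t 0
    have h1 := hcomb s t 1
    push_cast at h0 h1
    linear_combination h1 - h0
  have hAcont : Continuous A := by
    simp only [hA]
    exact ((hf₁.comp (continuous_const.add continuous_id)).sub hf₁).sub
      continuous_const |>.add continuous_const
  have hAlin : ∀ s : ℝ, A s = (s : ℂ) * A 1 := addCont_linear A hAcont hAadd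
  set a := A 1 with ha
  have hBrel : ∀ s t : ℝ, B (s + t) = B s + B t + a * s * t := by
    intro s t
    have h0 := hcomb s t 0
    push_cast at h0
    rw [hAlin s, hAlin t] at h0
    linear_combination h0
  set Cf : ℝ → ℂ := fun s => B s - a / 2 * (s : ℂ) ^ 2 with hCf
  have hCadd : ∀ s t : ℝ, Cf (s + t) = Cf s + Cf t := by
    intro s t
    simp only [hCf]
    push_cast
    linear_combination hBrel s t
  have hCcont : Continuous Cf := by
    simp only [hCf, hB]
    exact (hf₁.sub continuous_const).sub
      (continuous_const.mul (Complex.continuous_ofReal.pow 2))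
  have hClin : ∀ s : ℝ, Cf s = (s : ℂ) * Cf 1 := addCont_linear Cf hCcont hCadd
  refine ⟨a / 2, f₁ 1 - f₁ 0 - a / 2, f₁ 0, fun x => ?_⟩
  have h1 := hClin x
  simp only [hCf, hB] at h1
  push_cast at h1
  linear_combination h1

theorem stmt12 (f₁ f₂ g h : ℝ → ℂ) (hf₁ : Continuous f₁) (hf₂ : Continuous f₂)
    (b₁ b₂ c₁ c₂ : ℝ) (hb₁ : b₁ ≠ 0) (hb₂ : b₂ ≠ 0) (hc₁ : c₁ ≠ 0) (hc₂ : c₂ ≠ 0)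
    (hratio : c₁ / b₁ ≠ c₂ / b₂)
    (heq : ∀ x y : ℝ, f₁ (b₁ * x + c₁ * y) + f₂ (b₂ * x + c₂ * y) = g x + h y) :
    ∃ P₁ P₂ : Polynomial ℂ, P₁.natDegree ≤ 2 ∧ P₂.natDegree ≤ 2 ∧
      (∀ x : ℝ, f₁ x = P₁.eval (x : ℂ)) ∧ (∀ x : ℝ, f₂ x = P₂.eval (x : ℂ)) := by
  have hk : b₁ * c₂ - c₁ * b₂ ≠ 0 := by
    intro hcon
    apply hratio
    field_simp
    linarith [hcon]
  have hk2 : b₂ * c₁ - c₂ * b₁ ≠ 0 := by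
    intro hcon
    apply hk
    linarith
  have heq2 : ∀ x y : ℝ, f₂ (b₂ * x + c₂ * y) + f₁ (b₁ * x + c₁ * y) = g x + h y := by
    intro x y
    rw [add_comm]
    exact heq x y
  obtain ⟨a₁, b₁', c₁', h₁⟩ := key f₁ f₂ g h hf₁ b₁ b₂ c₁ c₂ hb₁ hc₁ hk heq
  obtain ⟨a₂, b₂', c₂', h₂⟩ := key f₂ f₁ g h hf₂ b₂ b₁ c₂ c₁ hb₂ hc₂ hk2 heq2
  refine ⟨Polynomial.C a₁ * Polynomial.X ^ 2 + Polynomial.C b₁' * Polynomial.X + Polynomial.C c₁',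
    Polynomial.C a₂ * Polynomial.X ^ 2 + Polynomial.C b₂' * Polynomial.X + Polynomial.C c₂',
    ?_, ?_, fun x => ?_, fun x => ?_⟩
  · compute_degree
  · compute_degree
  · simp [h₁ x]
  · simp [h₂ x]
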